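/- Let (Ω, ℱ, ℙ) be a probability space, let E₀ and E be measurable spaces, let Y₀ : Ω → E₀ be measurable, and let (Y_j)_{j ≥ 1} be measurable maps Y_j : Ω → E such that the family (Y₀, Y₁, Y₂, …) is independent and the Y_j, j ≥ 1, all have the same distribution. Let g : E₀ × E → ℝ be measurable with g(Y₀, Y₁) integrable. Then, ℙ-almost surely, (1/N) ∑_{j=1}^N g(Y₀, Y_j) converges as N → ∞ to 𝔼[g(Y₀, Y₁) | σ(Y₀)]. -/

import Mathlib

open MeasureTheory ProbabilityTheory Filter

/-- Conditional strong law of large numbers: if the family `(Y₀, Y₁, Y₂, …)` is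
independent, the `Y_j`, `j ≥ 1`, are identically distributed and `g(Y₀, Y₁)` is
integrable, then `(1/N) ∑_{j=1}^N g(Y₀, Y_j)` converges ℙ-a.s. to
`𝔼[g(Y₀, Y₁) | σ(Y₀)]`. -/
theorem conditional_slln_empirical_average
    {Ω E₀ E : Type*} [MeasurableSpace Ω] [MeasurableSpace E₀] [MeasurableSpace E]
    (μ : Measure Ω) [IsProbabilityMeasure μ]
    (Y₀ : Ω → E₀) (Y : ℕ → Ω → E)
    (hY₀ : Measurable Y₀) (hY : ∀ j, 1 ≤ j → Measurable (Y j))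
    (hindep : iIndep
      (fun i : ℕ =>
        if i = 0 then MeasurableSpace.comap Y₀ inferInstance
        else MeasurableSpace.comap (Y i) inferInstance) μ)
    (hident : ∀ j, 1 ≤ j → IdentDistrib (Y j) (Y 1) μ μ)
    (g : E₀ × E → ℝ) (hg : Measurable g)
    (hint : Integrable (fun ω => g (Y₀ ω, Y 1 ω)) μ) :
    ∀ᵐ ω ∂μ,
      Tendsto
        (fun N : ℕ => (N : ℝ)⁻¹ * ∑ j ∈ Finset.Icc 1 N, g (Y₀ ω, Y j ω))
        atTop
        (nhds ((μ[fun ω' => g (Y₀ ω', Y 1 ω') |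
          MeasurableSpace.comap Y₀ inferInstance]) ω)) := by
  classical
  have hY1 : Measurable (Y 1) := hY 1 le_rfl
  set ν₀ : Measure E₀ := μ.map Y₀ with hν₀def
  set ν₁ : Measure E := μ.map (Y 1) with hν₁def
  haveI : IsProbabilityMeasure ν₀ := Measure.isProbabilityMeasure_map hY₀.aemeasurable
  haveI : IsProbabilityMeasure ν₁ := Measure.isProbabilityMeasure_map hY1.aemeasurable
  set m : E₀ → ℝ := fun y₀ => ∫ y, g (y₀, y) ∂ν₁ with hmdef
  have hmsm : StronglyMeasurable m := hg.stronglyMeasurable.integral_prod_right'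
  -- basic independence facts
  have hmle : ∀ i : ℕ, (if i = 0 then MeasurableSpace.comap Y₀ inferInstance
      else MeasurableSpace.comap (Y i) inferInstance) ≤ ‹MeasurableSpace Ω› := by
    intro i
    by_cases hi : i = 0
    · simpa [hi] using hY₀.comap_le
    · simpa [hi] using (hY i (Nat.one_le_iff_ne_zero.mpr hi)).comap_le
  have hYind : ∀ i j : ℕ, 1 ≤ i → 1 ≤ j → i ≠ j → IndepFun (Y i) (Y j) μ := by
    intro i j hi hj hij
    have h := hindep.indep hij
    rw [if_neg (by omega), if_neg (by omega)] at h
    exact (IndepFun_iff_Indep _ _ _).mpr h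
  have hY0ind : IndepFun Y₀ (Y 1) μ := by
    have h := hindep.indep (show (0 : ℕ) ≠ 1 by omega)
    rw [if_pos rfl, if_neg (by omega)] at h
    exact (IndepFun_iff_Indep _ _ _).mpr h
  -- law of the pair (Y₀, Y 1)
  have hpairm : Measurable fun ω => (Y₀ ω, Y 1 ω) := hY₀.prodMk hY1
  have hpairlaw : μ.map (fun ω => (Y₀ ω, Y 1 ω)) = ν₀.prod ν₁ :=
    (indepFun_iff_map_prod_eq_prod_map_map hY₀.aemeasurable hY1.aemeasurable).mp hY0ind
  have hgprod : Integrable g (ν₀.prod ν₁) := by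
    rw [← hpairlaw]
    exact (integrable_map_measure hg.aestronglyMeasurable hpairm.aemeasurable).mpr hint
  have hmint0 : Integrable m ν₀ := hgprod.integral_prod_left
  have hmintΩ : Integrable (fun ω => m (Y₀ ω)) μ :=
    (integrable_map_measure hmsm.aestronglyMeasurable hY₀.aemeasurable).mp hmint0
  -- identification of the conditional expectation
  have hle : MeasurableSpace.comap Y₀ inferInstance ≤ ‹MeasurableSpace Ω› := hY₀.comap_le
  haveI : SigmaFinite (μ.trim hle) := inferInstance
  have hY₀comap : @Measurable Ω E₀ (MeasurableSpace.comap Y₀ inferInstance) _ Y₀ :=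
    fun s hs => ⟨s, hs, rfl⟩
  have hcond : (fun ω => m (Y₀ ω)) =ᵐ[μ]
      μ[fun ω' => g (Y₀ ω', Y 1 ω') | MeasurableSpace.comap Y₀ inferInstance] := by
    refine ae_eq_condExp_of_forall_setIntegral_eq hle hint
      (fun s _ _ => hmintΩ.integrableOn) (fun s hs _ => ?_) ?_
    · obtain ⟨A, hA, rfl⟩ := hs
      calc ∫ x in Y₀ ⁻¹' A, m (Y₀ x) ∂μ
          = ∫ y in A, m y ∂ν₀ :=
            (setIntegral_map hA hmsm.aestronglyMeasurable hY₀.aemeasurable).symm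
        _ = ∫ y in A, ∫ z in Set.univ, g (y, z) ∂ν₁ ∂ν₀ := by
            rw [Measure.restrict_univ]
        _ = ∫ p in A ×ˢ Set.univ, g p ∂(ν₀.prod ν₁) :=
            (setIntegral_prod _ hgprod.integrableOn).symm
        _ = ∫ x in (fun ω => (Y₀ ω, Y 1 ω)) ⁻¹' (A ×ˢ Set.univ), g (Y₀ x, Y 1 x) ∂μ := by
            rw [← hpairlaw]
            exact setIntegral_map (hA.prod MeasurableSet.univ) hg.aestronglyMeasurable
              hpairm.aemeasurable
        _ = ∫ x in Y₀ ⁻¹' A, g (Y₀ x, Y 1 x) ∂μ := by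
            have hset : (fun ω => (Y₀ ω, Y 1 ω)) ⁻¹' (A ×ˢ Set.univ) = Y₀ ⁻¹' A := by
              ext ω; simp
            rw [hset]
    · exact StronglyMeasurable.aestronglyMeasurable (hmsm.comp_measurable hY₀comap)
  -- the shifted sequence, as a map into the product space
  set Z : Ω → ℕ → E := fun ω i => Y (i + 1) ω with hZdef
  have hZ : Measurable Z := measurable_pi_lambda _ fun i => hY (i + 1) (by omega)
  set ρ : Measure (ℕ → E) := μ.map Z with hρdef
  haveI : IsProbabilityMeasure ρ := Measure.isProbabilityMeasure_map hZ.aemeasurable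
  have hZle : MeasurableSpace.comap Z inferInstance ≤
      ⨆ i ∈ {i : ℕ | i ≠ 0}, (if i = 0 then MeasurableSpace.comap Y₀ inferInstance
        else MeasurableSpace.comap (Y i) inferInstance) := by
    have hpi : (inferInstance : MeasurableSpace (ℕ → E)) =
        ⨆ i : ℕ, MeasurableSpace.comap (fun z : ℕ → E => z i) inferInstance := rfl
    rw [hpi, MeasurableSpace.comap_iSup]
    refine iSup_le fun i => ?_
    rw [MeasurableSpace.comap_comp]
    have hi1 : ((fun z : ℕ → E => z i) ∘ Z) = Y (i + 1) := rfl
    rw [hi1]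
    have hmem : (i + 1 : ℕ) ∈ {i : ℕ | i ≠ 0} := by simp
    refine le_trans ?_ (le_biSup _ hmem)
    rw [if_neg (by omega)]
  have hY0Z : IndepFun Y₀ Z μ := by
    have h := indep_iSup_of_disjoint hmle hindep (S := {0}) (T := {i : ℕ | i ≠ 0})
      (by simp [Set.disjoint_left])
    have hleft : MeasurableSpace.comap Y₀ inferInstance ≤
        ⨆ i ∈ ({0} : Set ℕ), (if i = 0 then MeasurableSpace.comap Y₀ inferInstance
          else MeasurableSpace.comap (Y i) inferInstance) := by
      simp
    exact (IndepFun_iff_Indep _ _ _).mpr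
      (indep_of_indep_of_le_right (indep_of_indep_of_le_left h hleft) hZle)
  have hpairZlaw : μ.map (fun ω => (Y₀ ω, Z ω)) = ν₀.prod ρ :=
    (indepFun_iff_map_prod_eq_prod_map_map hY₀.aemeasurable hZ.aemeasurable).mp hY0Z
  -- the SLLN for each fixed y₀
  have hint_ae : ∀ᵐ y₀ ∂ν₀, Integrable (fun y => g (y₀, y)) ν₁ := hgprod.prod_right_ae
  have key : ∀ᵐ y₀ ∂ν₀, ∀ᵐ ω ∂μ,
      Tendsto (fun N : ℕ => (∑ i ∈ Finset.range N, g (y₀, Y (i + 1) ω)) / N) atTop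
        (nhds (m y₀)) := by
    filter_upwards [hint_ae] with y₀ hy₀
    have hgy : Measurable fun y => g (y₀, y) := hg.comp measurable_prodMk_left
    have hX0 : Integrable (fun ω => g (y₀, Y (0 + 1) ω)) μ :=
      (integrable_map_measure hgy.aestronglyMeasurable hY1.aemeasurable).mp hy₀
    have hslln := strong_law_ae_real (fun i ω => g (y₀, Y (i + 1) ω)) hX0
      (fun i j hij => (hYind (i + 1) (j + 1) (by omega) (by omega) (by omega)).comp hgy hgy)
      (fun i => (hident (i + 1) (by omega)).comp hgy)
    have hmean : m y₀ = μ[fun ω => g (y₀, Y (0 + 1) ω)] := by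
      rw [hmdef]
      simp only [hν₁def]
      exact integral_map hY1.aemeasurable hgy.aestronglyMeasurable
    refine hslln.mono fun ω hω => ?_
    convert hω using 2
  -- the measurable set of convergence in the product space
  set B : Set (E₀ × (ℕ → E)) :=
    {p | Tendsto (fun N : ℕ => (∑ i ∈ Finset.range N, g (p.1, p.2 i)) / N) atTop
      (nhds (m p.1))} with hBdef
  have hB : MeasurableSet B := by
    rw [hBdef]
    exact measurableSet_tendsto_fun
      (fun N => (Finset.measurable_sum _ fun i _ =>
        hg.comp (measurable_fst.prodMk ((measurable_pi_apply i).comp measurable_snd))).div_const _)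
      (hmsm.measurable.comp measurable_fst)
  have h0 : (fun y₀ => ρ (Prod.mk y₀ ⁻¹' Bᶜ)) =ᵐ[ν₀] 0 := by
    filter_upwards [key] with y₀ hy₀
    rw [hρdef, Measure.map_apply hZ (hB.compl.preimage measurable_prodMk_left)]
    exact ae_iff.mp hy₀
  have hprod0 : (ν₀.prod ρ) Bᶜ = 0 := by
    rw [Measure.prod_apply hB.compl, lintegral_congr_ae h0]
    simp
  have hBmem : ∀ᵐ p ∂(ν₀.prod ρ), p ∈ B := by
    rw [ae_iff]
    exact hprod0
  have hpull : ∀ᵐ ω ∂μ, (Y₀ ω, Z ω) ∈ B := by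
    rw [← hpairZlaw] at hBmem
    exact (ae_map_iff (hY₀.prodMk hZ).aemeasurable hB).mp hBmem
  filter_upwards [hpull, hcond] with ω hω hcω
  rw [← hcω]
  have hrw : (fun N : ℕ => (N : ℝ)⁻¹ * ∑ j ∈ Finset.Icc 1 N, g (Y₀ ω, Y j ω))
      = fun N : ℕ => (∑ i ∈ Finset.range N, g (Y₀ ω, Y (i + 1) ω)) / N := by
    funext N
    rw [← Finset.Ico_add_one_right_eq_Icc, Finset.sum_Ico_eq_sum_range]
    simp [add_comm, inv_mul_eq_div]
  rw [hrw]
  exact hω
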